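/- Let U ⊆ ℝ² be open and w : U → ℝ a smooth solution of the reduced equation with ∂₂²w ≠ 0 and ∂₁∂₂²w ≠ 0 on U. Define θ⁰ := z₂ − z₁·∂₂²w and recursively θ^{k+1} := (∂₂²w/∂₁∂₂²w)·∂₂θ^k for k ≥ 0. Fix m ∈ ℕ and a smooth function ϱ : ℝ^{m+2} → ℝ. Then the pair F¹ := (∂₁∂₂²w/∂₂²w)·ϱ(∂₂²w, θ⁰, …, θ^m), F² := (∂₁∂₂²w)·ϱ(∂₂²w, θ⁰, …, θ^m) is divergence-free on U, i.e. ∂₁F¹ + ∂₂F² = 0 on U. -/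

import Mathlib

/-- First-coordinate partial derivative of a function on `ℝ²`. -/
noncomputable def d1 (f : ℝ × ℝ → ℝ) (p : ℝ × ℝ) : ℝ := deriv (fun s => f (s, p.2)) p.1

/-- Second-coordinate partial derivative of a function on `ℝ²`. -/
noncomputable def d2 (f : ℝ × ℝ → ℝ) (p : ℝ × ℝ) : ℝ := deriv (fun s => f (p.1, s)) p.2

/-- `w` is a smooth solution of the reduced equation `∂₁∂₂²w + (∂₂²w)·(∂₂³w) = 0` on `U`. -/
def IsRedSolOn (w : ℝ × ℝ → ℝ) (U : Set (ℝ × ℝ)) : Prop :=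
  ContDiffOn ℝ (⊤ : ℕ∞) w U ∧
    ∀ p ∈ U, d1 (d2 (d2 w)) p + d2 (d2 w) p * d2 (d2 (d2 w)) p = 0

/-- `h` is a smooth solution of the inviscid Burgers equation `∂₁h + h·∂₂h = 0` on `U`. -/
def IsBurgersSolOn (h : ℝ × ℝ → ℝ) (U : Set (ℝ × ℝ)) : Prop :=
  ContDiffOn ℝ (⊤ : ℕ∞) h U ∧ ∀ p ∈ U, d1 h p + h p * d2 h p = 0

/-- The lowest-order `z₂`-integral `ζ = ∂₁∂₂w + ½(∂₂²w)²` of the reduced equation. -/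
noncomputable def zetaInt (w : ℝ × ℝ → ℝ) (p : ℝ × ℝ) : ℝ :=
  d1 (d2 w) p + (1 / 2) * (d2 (d2 w) p) ^ 2

/-- `θ⁰ = z₂ − z₁·∂₂²w`. -/
noncomputable def theta0 (w : ℝ × ℝ → ℝ) (p : ℝ × ℝ) : ℝ := p.2 - p.1 * d2 (d2 w) p

/-- `θ¹ = ∂₂²w/∂₁∂₂²w + z₁`. -/
noncomputable def theta1 (w : ℝ × ℝ → ℝ) (p : ℝ × ℝ) : ℝ :=
  d2 (d2 w) p / d1 (d2 (d2 w)) p + p.1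

/-- `θ² = (∂₂²w/∂₁∂₂²w)·∂₂θ¹`. -/
noncomputable def theta2 (w : ℝ × ℝ → ℝ) (p : ℝ × ℝ) : ℝ :=
  d2 (d2 w) p / d1 (d2 (d2 w)) p * d2 (theta1 w) p

/-- `f` satisfies the generalized-symmetry condition
`∂₂(∂₁(∂₂f) + (∂₂²w)·∂₂(∂₂f)) = 0` of the reduced equation along the solution `w` on `U`. -/
def IsGenSymCharOn (w f : ℝ × ℝ → ℝ) (U : Set (ℝ × ℝ)) : Prop :=
  ∀ p ∈ U, d2 (fun q => d1 (d2 f) q + d2 (d2 w) q * d2 (d2 f) q) p = 0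

/-- The sequence `θ⁰ = z₂ − z₁·∂₂²w`, `θ^{k+1} = (∂₂²w/∂₁∂₂²w)·∂₂θ^k`. -/
noncomputable def thetaSeq (w : ℝ × ℝ → ℝ) : ℕ → ℝ × ℝ → ℝ
  | 0 => fun p => p.2 - p.1 * d2 (d2 w) p
  | k + 1 => fun p => d2 (d2 w) p / d1 (d2 (d2 w)) p * d2 (thetaSeq w k) p

/-- The argument vector `(∂₂²w, θ⁰, …, θ^m)` at a point `p`. -/
noncomputable def argvec (w : ℝ × ℝ → ℝ) (m : ℕ) (p : ℝ × ℝ) : Fin (m + 2) → ℝ :=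
  Fin.cons (d2 (d2 w) p) fun j : Fin (m + 1) => thetaSeq w j p

/-- Partial derivative of a function of `m + 2` real arguments in its `i`-th argument. -/
noncomputable def pdArg {m : ℕ} (g : (Fin (m + 2) → ℝ) → ℝ) (i : Fin (m + 2))
    (a : Fin (m + 2) → ℝ) : ℝ := deriv (fun t => g (Function.update a i t)) (a i)

/-! ### Auxiliary infrastructure -/

open Filter Topology

section Aux

variable {F : Type*} [NormedAddCommGroup F] [NormedSpace ℝ F]
variable {U : Set (ℝ × ℝ)} {p : ℝ × ℝ} {f : ℝ × ℝ → ℝ}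

lemma hasDerivAt_slice1 {f : ℝ × ℝ → F} (hf : DifferentiableAt ℝ f p) :
    HasDerivAt (fun s => f (s, p.2)) (fderiv ℝ f p (1, 0)) p.1 :=
  hf.hasFDerivAt.comp_hasDerivAt p.1 ((hasDerivAt_id p.1).prodMk (hasDerivAt_const p.1 p.2))

lemma hasDerivAt_slice2 {f : ℝ × ℝ → F} (hf : DifferentiableAt ℝ f p) :
    HasDerivAt (fun s => f (p.1, s)) (fderiv ℝ f p (0, 1)) p.2 :=
  hf.hasFDerivAt.comp_hasDerivAt p.2 ((hasDerivAt_const p.2 p.1).prodMk (hasDerivAt_id p.2))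

lemma hasDerivAt_d1 (hf : DifferentiableAt ℝ f p) :
    HasDerivAt (fun s => f (s, p.2)) (d1 f p) p.1 := by
  have := hasDerivAt_slice1 hf
  rwa [show d1 f p = fderiv ℝ f p (1, 0) from this.deriv]

lemma hasDerivAt_d2 (hf : DifferentiableAt ℝ f p) :
    HasDerivAt (fun s => f (p.1, s)) (d2 f p) p.2 := by
  have := hasDerivAt_slice2 hf
  rwa [show d2 f p = fderiv ℝ f p (0, 1) from this.deriv]

lemma diffAt (hU : IsOpen U) (hf : ContDiffOn ℝ (⊤ : ℕ∞) f U) (hp : p ∈ U) :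
    DifferentiableAt ℝ f p :=
  (hf.contDiffAt (hU.mem_nhds hp)).differentiableAt (by simp)

lemma contDiffOn_d1 (hU : IsOpen U) (hf : ContDiffOn ℝ (⊤ : ℕ∞) f U) :
    ContDiffOn ℝ (⊤ : ℕ∞) (d1 f) U := by
  have hfd : ContDiffOn ℝ (⊤ : ℕ∞) (fderiv ℝ f) U := hf.fderiv_of_isOpen hU (by simp)
  have h2 : ContDiffOn ℝ (⊤ : ℕ∞) (fun q => fderiv ℝ f q (1, 0)) U :=
    (ContinuousLinearMap.apply ℝ ℝ ((1 : ℝ), (0 : ℝ))).contDiff.comp_contDiffOn hfd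
  exact h2.congr fun q hq => (hasDerivAt_slice1 (diffAt hU hf hq)).deriv

lemma contDiffOn_d2 (hU : IsOpen U) (hf : ContDiffOn ℝ (⊤ : ℕ∞) f U) :
    ContDiffOn ℝ (⊤ : ℕ∞) (d2 f) U := by
  have hfd : ContDiffOn ℝ (⊤ : ℕ∞) (fderiv ℝ f) U := hf.fderiv_of_isOpen hU (by simp)
  have h2 : ContDiffOn ℝ (⊤ : ℕ∞) (fun q => fderiv ℝ f q (0, 1)) U :=
    (ContinuousLinearMap.apply ℝ ℝ ((0 : ℝ), (1 : ℝ))).contDiff.comp_contDiffOn hfd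
  exact h2.congr fun q hq => (hasDerivAt_slice2 (diffAt hU hf hq)).deriv

lemma tendsto_horiz (p : ℝ × ℝ) : Tendsto (fun s : ℝ => (s, p.2)) (𝓝 p.1) (𝓝 p) :=
  Continuous.tendsto (continuous_id.prodMk continuous_const) p.1

lemma tendsto_vert (p : ℝ × ℝ) : Tendsto (fun s : ℝ => (p.1, s)) (𝓝 p.2) (𝓝 p) :=
  Continuous.tendsto (continuous_const.prodMk continuous_id) p.2

lemma d1_congr {g : ℝ × ℝ → ℝ} (h : f =ᶠ[𝓝 p] g) : d1 f p = d1 g p :=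
  Filter.EventuallyEq.deriv_eq (h.comp_tendsto (tendsto_horiz p))

lemma d2_congr {g : ℝ × ℝ → ℝ} (h : f =ᶠ[𝓝 p] g) : d2 f p = d2 g p :=
  Filter.EventuallyEq.deriv_eq (h.comp_tendsto (tendsto_vert p))

/-- Schwarz's theorem for the partial-derivative operators `d1`, `d2`. -/
lemma d1_d2_comm (hU : IsOpen U) (hf : ContDiffOn ℝ (⊤ : ℕ∞) f U) (hp : p ∈ U) :
    d1 (d2 f) p = d2 (d1 f) p := by
  have hfp : ContDiffAt ℝ (⊤ : ℕ∞) f p := hf.contDiffAt (hU.mem_nhds hp)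
  have hsymm : IsSymmSndFDerivAt ℝ f p :=
    hfp.isSymmSndFDerivAt (by simp only [minSmoothness_of_isRCLikeNormedField]; exact_mod_cast ENat.natCast_le_of_coe_top_le_withTop le_rfl 2)
  have hfd : DifferentiableAt ℝ (fderiv ℝ f) p :=
    (hfp.fderiv_right (m := (⊤ : ℕ∞)) (by simp)).differentiableAt (by simp)
  have hUn : U ∈ 𝓝 p := hU.mem_nhds hp
  have e2 : d2 f =ᶠ[𝓝 p] fun q => fderiv ℝ f q (0, 1) := by
    filter_upwards [hUn] with q hq
    exact (hasDerivAt_slice2 (diffAt hU hf hq)).deriv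
  have e1 : d1 f =ᶠ[𝓝 p] fun q => fderiv ℝ f q (1, 0) := by
    filter_upwards [hUn] with q hq
    exact (hasDerivAt_slice1 (diffAt hU hf hq)).deriv
  have h12 : d1 (d2 f) p = fderiv ℝ (fderiv ℝ f) p (1, 0) (0, 1) := by
    rw [d1_congr e2]
    exact ((ContinuousLinearMap.apply ℝ ℝ ((0 : ℝ), (1 : ℝ))).hasFDerivAt.comp_hasDerivAt p.1
      (hasDerivAt_slice1 hfd)).deriv
  have h21 : d2 (d1 f) p = fderiv ℝ (fderiv ℝ f) p (0, 1) (1, 0) := by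
    rw [d2_congr e1]
    exact ((ContinuousLinearMap.apply ℝ ℝ ((1 : ℝ), (0 : ℝ))).hasFDerivAt.comp_hasDerivAt p.2
      (hasDerivAt_slice2 hfd)).deriv
  rw [h12, h21, hsymm (1, 0) (0, 1)]

/-- The vertical derivative of a function vanishing on an open set vanishes. -/
lemma vert_deriv_zero (hU : IsOpen U) (hp : p ∈ U) {G : ℝ × ℝ → ℝ}
    (hG : ∀ q ∈ U, G q = 0) {D : ℝ} (h : HasDerivAt (fun s => G (p.1, s)) D p.2) : D = 0 := by
  have hev : (fun s : ℝ => (0 : ℝ)) =ᶠ[𝓝 p.2] fun s => G (p.1, s) := by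
    filter_upwards [(tendsto_vert p).eventually (hU.eventually_mem hp)] with s hs
    exact (hG _ hs).symm
  exact (h.congr_of_eventuallyEq hev).unique (hasDerivAt_const _ _)

/-- The horizontal derivative of a function vanishing on an open set vanishes. -/
lemma horiz_deriv_zero (hU : IsOpen U) (hp : p ∈ U) {G : ℝ × ℝ → ℝ}
    (hG : ∀ q ∈ U, G q = 0) {D : ℝ} (h : HasDerivAt (fun s => G (s, p.2)) D p.1) : D = 0 := by
  have hev : (fun s : ℝ => (0 : ℝ)) =ᶠ[𝓝 p.1] fun s => G (s, p.2) := by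
    filter_upwards [(tendsto_horiz p).eventually (hU.eventually_mem hp)] with s hs
    exact (hG _ hs).symm
  exact (h.congr_of_eventuallyEq hev).unique (hasDerivAt_const _ _)

end Aux

section Theta

variable {U : Set (ℝ × ℝ)} {w : ℝ × ℝ → ℝ}

/-- Each `θᵏ` is smooth and satisfies the transport equation `∂₁θ + (∂₂²w)·∂₂θ = 0` on `U`. -/
lemma theta_transport (hU : IsOpen U) (hw : ContDiffOn ℝ (⊤ : ℕ∞) w U)
    (heq : ∀ p ∈ U, d1 (d2 (d2 w)) p + d2 (d2 w) p * d2 (d2 (d2 w)) p = 0)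
    (h22 : ∀ p ∈ U, d2 (d2 w) p ≠ 0) (h122 : ∀ p ∈ U, d1 (d2 (d2 w)) p ≠ 0) (k : ℕ) :
    ContDiffOn ℝ (⊤ : ℕ∞) (thetaSeq w k) U ∧
      ∀ p ∈ U, d1 (thetaSeq w k) p + d2 (d2 w) p * d2 (thetaSeq w k) p = 0 := by
  have hu : ContDiffOn ℝ (⊤ : ℕ∞) (d2 (d2 w)) U := contDiffOn_d2 hU (contDiffOn_d2 hU hw)
  induction k with
  | zero =>
    constructor
    · show ContDiffOn ℝ (⊤ : ℕ∞) (fun q : ℝ × ℝ => q.2 - q.1 * d2 (d2 w) q) U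
      exact (contDiff_snd.contDiffOn).sub ((contDiff_fst.contDiffOn).mul hu)
    · intro p hp
      have hu' := diffAt hU hu hp
      have e1 : d1 (thetaSeq w 0) p
          = 0 - (1 * d2 (d2 w) p + p.1 * d1 (d2 (d2 w)) p) :=
        ((hasDerivAt_const p.1 p.2).sub
          ((hasDerivAt_id p.1).mul (hasDerivAt_d1 hu'))).deriv
      have e2 : d2 (thetaSeq w 0) p
          = 1 - (0 * d2 (d2 w) p + p.1 * d2 (d2 (d2 w)) p) :=
        ((hasDerivAt_id p.2).sub
          ((hasDerivAt_const p.2 p.1).mul (hasDerivAt_d2 hu'))).deriv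
      rw [e1, e2]
      linear_combination (-p.1) * heq p hp
  | succ k ih =>
    obtain ⟨ihs, iht⟩ := ih
    have hA : ContDiffOn ℝ (⊤ : ℕ∞) (d1 (d2 (d2 w))) U := contDiffOn_d1 hU hu
    have hphi : ContDiffOn ℝ (⊤ : ℕ∞) (d2 (thetaSeq w k)) U := contDiffOn_d2 hU ihs
    have hd2u : ContDiffOn ℝ (⊤ : ℕ∞) (d2 (d2 (d2 w))) U := contDiffOn_d2 hU hu
    constructor
    · show ContDiffOn ℝ (⊤ : ℕ∞)
        (fun q => d2 (d2 w) q / d1 (d2 (d2 w)) q * d2 (thetaSeq w k) q) U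
      exact (hu.div hA h122).mul hphi
    · intro p hp
      have hu' := diffAt hU hu hp
      have hA' := diffAt hU hA hp
      have hphi' := diffAt hU hphi hp
      have hd2u' := diffAt hU hd2u hp
      have hd1th' := diffAt hU (contDiffOn_d1 hU ihs) hp
      have hAe : d1 (d2 (d2 w)) p ≠ 0 := h122 p hp
      -- the two partial derivatives of θ^{k+1}
      have e1 : d1 (thetaSeq w (k + 1)) p
          = ((d1 (d2 (d2 w)) p * d1 (d2 (d2 w)) p
                - d2 (d2 w) p * d1 (d1 (d2 (d2 w))) p) / d1 (d2 (d2 w)) p ^ 2)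
              * d2 (thetaSeq w k) p
            + d2 (d2 w) p / d1 (d2 (d2 w)) p * d1 (d2 (thetaSeq w k)) p :=
        (((hasDerivAt_d1 hu').div (hasDerivAt_d1 hA') hAe).mul (hasDerivAt_d1 hphi')).deriv
      have e2 : d2 (thetaSeq w (k + 1)) p
          = ((d2 (d2 (d2 w)) p * d1 (d2 (d2 w)) p
                - d2 (d2 w) p * d2 (d1 (d2 (d2 w))) p) / d1 (d2 (d2 w)) p ^ 2)
              * d2 (thetaSeq w k) p
            + d2 (d2 w) p / d1 (d2 (d2 w)) p * d2 (d2 (thetaSeq w k)) p :=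
        (((hasDerivAt_d2 hu').div (hasDerivAt_d2 hA') hAe).mul (hasDerivAt_d2 hphi')).deriv
      -- identities
      have hB : d1 (d2 (d2 w)) p = -(d2 (d2 w) p * d2 (d2 (d2 w)) p) := by
        linear_combination heq p hp
      -- Burgers differentiated in z₁
      have hHB : d1 (d1 (d2 (d2 w))) p
          = -(d1 (d2 (d2 w)) p * d2 (d2 (d2 w)) p
              + d2 (d2 w) p * d1 (d2 (d2 (d2 w))) p) := by
        have h0 := horiz_deriv_zero hU hp heq
          ((hasDerivAt_d1 hA').add ((hasDerivAt_d1 hu').mul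
            (hasDerivAt_d1 hd2u')))
        linear_combination h0
      -- Schwarz for u
      have hSu : d1 (d2 (d2 (d2 w))) p = d2 (d1 (d2 (d2 w))) p := d1_d2_comm hU hu hp
      -- transport of θ^k differentiated in z₂
      have hVT : d1 (d2 (thetaSeq w k)) p
          = -(d2 (d2 (d2 w)) p * d2 (thetaSeq w k) p
              + d2 (d2 w) p * d2 (d2 (thetaSeq w k)) p) := by
        have hSth : d1 (d2 (thetaSeq w k)) p = d2 (d1 (thetaSeq w k)) p :=
          d1_d2_comm hU ihs hp
        have h0 := vert_deriv_zero hU hp iht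
          ((hasDerivAt_d2 hd1th').add ((hasDerivAt_d2 hu').mul (hasDerivAt_d2 hphi')))
        linear_combination hSth + h0
      -- nonvanishing of ∂₂u
      have hu0 : d2 (d2 w) p ≠ 0 := h22 p hp
      have hu2 : d2 (d2 (d2 w)) p ≠ 0 := by
        intro h
        apply hAe
        rw [hB, h, mul_zero, neg_zero]
      rw [e1, e2, hVT, hHB, ← hSu, hB]
      field_simp
      ring


end Theta

/-- The family of conserved currents of the reduced equation
parameterized by an arbitrary smooth function `ϱ` of `∂₂²w` and `θ⁰, …, θ^m`. -/
theorem statement12 (U : Set (ℝ × ℝ)) (hU : IsOpen U) (w : ℝ × ℝ → ℝ)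
    (hred : IsRedSolOn w U)
    (h22 : ∀ p ∈ U, d2 (d2 w) p ≠ 0) (h122 : ∀ p ∈ U, d1 (d2 (d2 w)) p ≠ 0)
    (m : ℕ) (ϱ : (Fin (m + 2) → ℝ) → ℝ) (hϱ : ContDiff ℝ (⊤ : ℕ∞) ϱ) :
    ∀ p ∈ U,
      d1 (fun q => d1 (d2 (d2 w)) q / d2 (d2 w) q * ϱ (argvec w m q)) p
        + d2 (fun q => d1 (d2 (d2 w)) q * ϱ (argvec w m q)) p = 0 := by
  obtain ⟨hw, heq⟩ := hred
  have hu : ContDiffOn ℝ (⊤ : ℕ∞) (d2 (d2 w)) U := contDiffOn_d2 hU (contDiffOn_d2 hU hw)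
  have hA : ContDiffOn ℝ (⊤ : ℕ∞) (d1 (d2 (d2 w))) U := contDiffOn_d1 hU hu
  have hd2u : ContDiffOn ℝ (⊤ : ℕ∞) (d2 (d2 (d2 w))) U := contDiffOn_d2 hU hu
  have htheta := theta_transport hU hw heq h22 h122
  intro p hp
  have hu' := diffAt hU hu hp
  have hA' := diffAt hU hA hp
  have hd2u' := diffAt hU hd2u hp
  have hu0 : d2 (d2 w) p ≠ 0 := h22 p hp
  -- derivative vectors of the argument map along the two coordinate lines
  set v1 : Fin (m + 2) → ℝ :=
    Fin.cons (d1 (d2 (d2 w)) p) (fun j : Fin (m + 1) => d1 (thetaSeq w j) p) with hv1def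
  set v2 : Fin (m + 2) → ℝ :=
    Fin.cons (d2 (d2 (d2 w)) p) (fun j : Fin (m + 1) => d2 (thetaSeq w j) p) with hv2def
  have hv1 : HasDerivAt (fun s => argvec w m (s, p.2)) v1 p.1 := by
    rw [hasDerivAt_pi]
    intro i
    refine Fin.cases ?_ ?_ i
    · simpa [argvec, hv1def] using hasDerivAt_d1 hu'
    · intro j
      simpa [argvec, hv1def] using hasDerivAt_d1 (diffAt hU (htheta j).1 hp)
  have hv2 : HasDerivAt (fun s => argvec w m (p.1, s)) v2 p.2 := by
    rw [hasDerivAt_pi]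
    intro i
    refine Fin.cases ?_ ?_ i
    · simpa [argvec, hv2def] using hasDerivAt_d2 hu'
    · intro j
      simpa [argvec, hv2def] using hasDerivAt_d2 (diffAt hU (htheta j).1 hp)
  -- chain rule for ϱ along the coordinate lines
  have hϱd : HasFDerivAt ϱ (fderiv ℝ ϱ (argvec w m p)) (argvec w m p) :=
    (hϱ.differentiable (by simp) _).hasFDerivAt
  have HR1 : HasDerivAt (fun s => ϱ (argvec w m (s, p.2)))
      (fderiv ℝ ϱ (argvec w m p) v1) p.1 := hϱd.comp_hasDerivAt p.1 hv1
  have HR2 : HasDerivAt (fun s => ϱ (argvec w m (p.1, s)))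
      (fderiv ℝ ϱ (argvec w m p) v2) p.2 := hϱd.comp_hasDerivAt p.2 hv2
  -- transport equation for ϱ(argvec)
  have hvrel : v1 + d2 (d2 w) p • v2 = 0 := by
    funext i
    refine Fin.cases ?_ ?_ i
    · simpa [hv1def, hv2def] using heq p hp
    · intro j
      simpa [hv1def, hv2def] using (htheta j).2 p hp
  have hrho : fderiv ℝ ϱ (argvec w m p) v1
      = -(d2 (d2 w) p * fderiv ℝ ϱ (argvec w m p) v2) := by
    have h0 : fderiv ℝ ϱ (argvec w m p) v1
        + d2 (d2 w) p * fderiv ℝ ϱ (argvec w m p) v2 = 0 := by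
      rw [← smul_eq_mul, ← (fderiv ℝ ϱ (argvec w m p)).map_smul, ←
        (fderiv ℝ ϱ (argvec w m p)).map_add, hvrel, (fderiv ℝ ϱ (argvec w m p)).map_zero]
    linarith
  -- the two partial derivatives of the currents
  have e1 : d1 (fun q => d1 (d2 (d2 w)) q / d2 (d2 w) q * ϱ (argvec w m q)) p
      = ((d1 (d1 (d2 (d2 w))) p * d2 (d2 w) p
            - d1 (d2 (d2 w)) p * d1 (d2 (d2 w)) p) / d2 (d2 w) p ^ 2)
          * ϱ (argvec w m p)
        + d1 (d2 (d2 w)) p / d2 (d2 w) p * fderiv ℝ ϱ (argvec w m p) v1 :=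
    (((hasDerivAt_d1 hA').div (hasDerivAt_d1 hu') hu0).mul HR1).deriv
  have e2 : d2 (fun q => d1 (d2 (d2 w)) q * ϱ (argvec w m q)) p
      = d2 (d1 (d2 (d2 w))) p * ϱ (argvec w m p)
        + d1 (d2 (d2 w)) p * fderiv ℝ ϱ (argvec w m p) v2 :=
    ((hasDerivAt_d2 hA').mul HR2).deriv
  -- identities
  have hB : d1 (d2 (d2 w)) p = -(d2 (d2 w) p * d2 (d2 (d2 w)) p) := by
    linear_combination heq p hp
  have hHB : d1 (d1 (d2 (d2 w))) p
      = -(d1 (d2 (d2 w)) p * d2 (d2 (d2 w)) p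
          + d2 (d2 w) p * d1 (d2 (d2 (d2 w))) p) := by
    have h0 := horiz_deriv_zero hU hp heq
      ((hasDerivAt_d1 hA').add ((hasDerivAt_d1 hu').mul (hasDerivAt_d1 hd2u')))
    linear_combination h0
  have hSu : d1 (d2 (d2 (d2 w))) p = d2 (d1 (d2 (d2 w))) p := d1_d2_comm hU hu hp
  rw [e1, e2, hrho, hHB, ← hSu, hB]
  field_simp
  ring
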